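/- On the positive orthant of ℝⁿ with r^p = Σᵢ xᵢ^p (p > 0), for any C² function f : (0,∞) → ℝ and real m ≠ 0, the function u(x) = f(r^m) satisfies L u = m² t² f''(t) + m(m + 2φ) t f'(t) + λ f(t) evaluated at t = r^m, where L u = Σᵢ (r/xᵢ)^p [xᵢ² ∂²u/∂xᵢ² + αᵢ xᵢ ∂u/∂xᵢ] + λ u and 2φ = -p + n(p-1) + Σᵢ αᵢ. In particular, u = f(r^m) solves L u = 0 if and only if f satisfies the Euler ODE m² t² f'' + m(m+2φ) t f' + λ f = 0. -/

import Mathlib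

open Real Set

/-- Partial derivative in the `i`-th coordinate. -/
noncomputable def pd {n : ℕ} (i : Fin n) (u : (Fin n → ℝ) → ℝ) (x : Fin n → ℝ) : ℝ :=
  deriv (fun t => u (Function.update x i t)) (x i)

/-- `r x = (x₁^p + ⋯ + xₙ^p)^(1/p)`. -/
noncomputable def rad {n : ℕ} (p : ℝ) (x : Fin n → ℝ) : ℝ :=
  (∑ i, x i ^ p) ^ (1 / p)

/-- The singular operator `L`. -/
noncomputable def Lop {n : ℕ} (p : ℝ) (α : Fin n → ℝ) (lam : ℝ)
    (u : (Fin n → ℝ) → ℝ) : (Fin n → ℝ) → ℝ :=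
  fun x => (∑ i, (rad p x / x i) ^ p *
      ((x i) ^ 2 * pd i (fun y => pd i u y) x + α i * x i * pd i u x)) + lam * u x

lemma sum_update {n : ℕ} (p : ℝ) (x : Fin n → ℝ) (i : Fin n) (s : ℝ) :
    ∑ j, Function.update x i s j ^ p = s ^ p + ∑ j ∈ Finset.univ \ {i}, x j ^ p :=
  calc ∑ j, Function.update x i s j ^ p
      = ∑ j, Function.update (fun j => x j ^ p) i (s ^ p) j :=
        Finset.sum_congr rfl fun j _ => (Function.apply_update (fun _ v => v ^ p) x i s j)
    _ = s ^ p + ∑ j ∈ Finset.univ \ {i}, x j ^ p :=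
        Finset.sum_update_of_mem (Finset.mem_univ i) _ _

lemma rad_pow {n : ℕ} (p m : ℝ) (x : Fin n → ℝ) (hS : 0 ≤ ∑ j, x j ^ p) :
    rad p x ^ m = (∑ j, x j ^ p) ^ (m / p) := by
  rw [rad, ← Real.rpow_mul hS, one_div, inv_mul_eq_div]
lemma fderiv1 {f : ℝ → ℝ} {p m C : ℝ} (hp : 0 < p) (hfd : DifferentiableOn ℝ f (Ioi 0)) (hC : 0 ≤ C)
    {s : ℝ} (hs : 0 < s) :
    HasDerivAt (fun s : ℝ => f ((s ^ p + C) ^ (m / p)))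
      (deriv f ((s ^ p + C) ^ (m / p)) * (m * (s ^ p + C) ^ (m / p - 1) * s ^ (p - 1))) s := by
  have hS : 0 < s ^ p + C := add_pos_of_pos_of_nonneg (Real.rpow_pos_of_pos hs p) hC
  have ht : 0 < (s ^ p + C) ^ (m / p) := Real.rpow_pos_of_pos hS _
  have hg : HasDerivAt (fun s : ℝ => s ^ p + C) (p * s ^ (p - 1)) s :=
    (Real.hasDerivAt_rpow_const (Or.inl hs.ne')).add_const C
  have hpow : HasDerivAt (fun y : ℝ => y ^ (m / p)) (m / p * (s ^ p + C) ^ (m / p - 1)) (s ^ p + C) :=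
    Real.hasDerivAt_rpow_const (Or.inl hS.ne')
  have hfd' : HasDerivAt f (deriv f ((s ^ p + C) ^ (m / p))) ((s ^ p + C) ^ (m / p)) :=
    (hfd.differentiableAt (isOpen_Ioi.mem_nhds ht)).hasDerivAt
  have := hfd'.comp s (hpow.comp s hg)
  refine this.congr_deriv ?_
  field_simp

lemma fderiv2 {f : ℝ → ℝ} {p m C : ℝ} (hp : 0 < p) (hf : ContDiffOn ℝ 2 f (Ioi 0)) (hC : 0 ≤ C)
    {s : ℝ} (hs : 0 < s) :
    HasDerivAt (fun s : ℝ => deriv f ((s ^ p + C) ^ (m / p)) * (m * (s ^ p + C) ^ (m / p - 1) * s ^ (p - 1)))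
      (deriv (deriv f) ((s ^ p + C) ^ (m / p)) * (m * (s ^ p + C) ^ (m / p - 1) * s ^ (p - 1)) * (m * (s ^ p + C) ^ (m / p - 1) * s ^ (p - 1))
        + deriv f ((s ^ p + C) ^ (m / p)) * (m * (m - p) * (s ^ p + C) ^ (m / p - 2) * s ^ (2 * p - 2) + m * (p - 1) * (s ^ p + C) ^ (m / p - 1) * s ^ (p - 2))) s := by
  have hS : 0 < s ^ p + C := add_pos_of_pos_of_nonneg (Real.rpow_pos_of_pos hs p) hC
  have hg : HasDerivAt (fun s : ℝ => s ^ p + C) (p * s ^ (p - 1)) s :=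
    (Real.hasDerivAt_rpow_const (Or.inl hs.ne')).add_const C
  have hdf : DifferentiableOn ℝ (deriv f) (Ioi 0) :=
    (hf.deriv_of_isOpen (m := 1) isOpen_Ioi (by norm_num)).differentiableOn one_ne_zero
  have hA : HasDerivAt (fun s : ℝ => deriv f ((s ^ p + C) ^ (m / p)))
      (deriv (deriv f) ((s ^ p + C) ^ (m / p)) * (m * (s ^ p + C) ^ (m / p - 1) * s ^ (p - 1))) s :=
    fderiv1 hp hdf hC hs
  have hB1 : HasDerivAt (fun s : ℝ => (s ^ p + C) ^ (m / p - 1))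
      ((m / p - 1) * (s ^ p + C) ^ (m / p - 1 - 1) * (p * s ^ (p - 1))) s :=
    by have h := Real.hasDerivAt_rpow_const (p := m / p - 1) (Or.inl hS.ne'); exact h.comp s hg
  have hB2 : HasDerivAt (fun s : ℝ => s ^ (p - 1)) ((p - 1) * s ^ (p - 1 - 1)) s :=
    Real.hasDerivAt_rpow_const (Or.inl hs.ne')
  have hB : HasDerivAt (fun s : ℝ => m * (s ^ p + C) ^ (m / p - 1) * s ^ (p - 1))
      ((m * ((m / p - 1) * (s ^ p + C) ^ (m / p - 1 - 1) * (p * s ^ (p - 1)))) * s ^ (p - 1)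
        + m * (s ^ p + C) ^ (m / p - 1) * ((p - 1) * s ^ (p - 1 - 1))) s :=
    (hB1.const_mul m).mul hB2
  have := hA.mul hB
  refine this.congr_deriv ?_
  have e1 : s ^ (2 * p - 2) = s ^ (p - 1) * s ^ (p - 1) := by
    rw [← Real.rpow_add hs]; ring_nf
  have e2 : (m / p - 1 - 1) = (m / p - 2) := by ring
  have e3 : (p - 1 - 1) = (p - 2) := by ring
  rw [e1, ← e2, ← e3]
  field_simp

lemma alg1 (A B m p a x S : ℝ) (hx : 0 < x) (hS : 0 < S) (hp : 0 < p) :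
    (S ^ (1/p) / x) ^ p *
      (x ^ 2 * (A * (m * S ^ (m/p-1) * x ^ (p-1)) * (m * S ^ (m/p-1) * x ^ (p-1))
          + B * (m * (m-p) * S ^ (m/p-2) * x ^ (2*p-2) + m * (p-1) * S ^ (m/p-1) * x ^ (p-2)))
        + a * x * (B * (m * S ^ (m/p-1) * x ^ (p-1))))
    = m^2 * A * (S ^ (m/p) * S ^ (m/p) / S) * x ^ p + m * (m-p) * B * (S ^ (m/p) / S) * x ^ p
      + (m * (p-1) + m * a) * B * S ^ (m/p) := by
  have h0 : (S ^ (1/p) / x) ^ p = S / x ^ p := by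
    rw [Real.div_rpow (Real.rpow_nonneg hS.le _) hx.le, ← Real.rpow_mul hS.le,
      one_div, inv_mul_cancel₀ hp.ne', Real.rpow_one]
  have e2 : (2:ℝ) = ((2:ℕ):ℝ) := by norm_num
  have h2 : S ^ (m/p-2) = S ^ (m/p) / S ^ (2:ℕ) := by
    rw [Real.rpow_sub hS, e2, Real.rpow_natCast]
  have h1 : S ^ (m/p-1) = S ^ (m/p) / S := by rw [Real.rpow_sub hS, Real.rpow_one]
  have g1 : x ^ (p-1) = x ^ p / x := by rw [Real.rpow_sub hx, Real.rpow_one]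
  have g2 : x ^ (p-2) = x ^ p / x ^ (2:ℕ) := by rw [Real.rpow_sub hx, e2, Real.rpow_natCast]
  have g3 : x ^ (2*p-2) = x ^ p * x ^ p / x ^ (2:ℕ) := by
    rw [show (2*p-2 : ℝ) = (p + p) - 2 by ring, Real.rpow_sub hx, Real.rpow_add hx, e2,
      Real.rpow_natCast]
  rw [h0, h1, h2, g1, g2, g3]
  have hX : (0:ℝ) < x ^ p := Real.rpow_pos_of_pos hx p
  field_simp
  ring

lemma pd_one {n : ℕ} {p m : ℝ} (hp : 0 < p) {f : ℝ → ℝ}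
    (hfd : DifferentiableOn ℝ f (Ioi 0))
    (x : Fin n → ℝ) (hx : ∀ i, 0 < x i) (i : Fin n) :
    pd i (fun y => f (rad p y ^ m)) x
      = deriv f ((∑ j, x j ^ p) ^ (m / p))
          * (m * (∑ j, x j ^ p) ^ (m / p - 1) * x i ^ (p - 1)) := by
  set C := ∑ j ∈ Finset.univ \ {i}, x j ^ p with hCdef
  have hC : 0 ≤ C := Finset.sum_nonneg fun j _ => Real.rpow_nonneg (hx j).le p
  have hSx : ∑ j, x j ^ p = x i ^ p + C := by
    rw [← sum_update p x i (x i), Function.update_eq_self]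
  have hev : (fun s => f (rad p (Function.update x i s) ^ m))
      =ᶠ[nhds (x i)] (fun s => f ((s ^ p + C) ^ (m / p))) := by
    filter_upwards [isOpen_Ioi.mem_nhds (hx i)] with s hs
    have hs' : (0:ℝ) < s := hs
    have hSpos : 0 ≤ ∑ j, Function.update x i s j ^ p := by
      rw [sum_update]
      positivity
    rw [rad_pow p m _ hSpos, sum_update]
  rw [pd, hev.deriv_eq, (fderiv1 hp hfd hC (hx i)).deriv, hSx]

lemma pd_two {n : ℕ} {p m : ℝ} (hp : 0 < p) {f : ℝ → ℝ}
    (hf : ContDiffOn ℝ 2 f (Ioi 0))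
    (x : Fin n → ℝ) (hx : ∀ i, 0 < x i) (i : Fin n) :
    pd i (fun y => pd i (fun y' => f (rad p y' ^ m)) y) x
      = deriv (deriv f) ((∑ j, x j ^ p) ^ (m / p))
            * (m * (∑ j, x j ^ p) ^ (m / p - 1) * x i ^ (p - 1))
            * (m * (∑ j, x j ^ p) ^ (m / p - 1) * x i ^ (p - 1))
        + deriv f ((∑ j, x j ^ p) ^ (m / p))
            * (m * (m - p) * (∑ j, x j ^ p) ^ (m / p - 2) * x i ^ (2 * p - 2)
              + m * (p - 1) * (∑ j, x j ^ p) ^ (m / p - 1) * x i ^ (p - 2)) := by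
  have hfd : DifferentiableOn ℝ f (Ioi 0) := hf.differentiableOn (by norm_num)
  set C := ∑ j ∈ Finset.univ \ {i}, x j ^ p with hCdef
  have hC : 0 ≤ C := Finset.sum_nonneg fun j _ => Real.rpow_nonneg (hx j).le p
  have hSx : ∑ j, x j ^ p = x i ^ p + C := by
    rw [← sum_update p x i (x i), Function.update_eq_self]
  have hev : (fun s => pd i (fun y' => f (rad p y' ^ m)) (Function.update x i s))
      =ᶠ[nhds (x i)] (fun s => deriv f ((s ^ p + C) ^ (m / p))
          * (m * (s ^ p + C) ^ (m / p - 1) * s ^ (p - 1))) := by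
    filter_upwards [isOpen_Ioi.mem_nhds (hx i)] with s hs
    have hs' : (0:ℝ) < s := hs
    have hxp : ∀ j, 0 < Function.update x i s j := by
      intro j
      rcases eq_or_ne j i with h | h
      · rw [h, Function.update_self]; exact hs'
      · rw [Function.update_of_ne h]; exact hx j
    rw [pd_one hp hfd (Function.update x i s) hxp i]
    have hsum : ∑ j, Function.update x i s j ^ p = s ^ p + C := sum_update p x i s
    rw [hsum, Function.update_self]
  rw [pd, hev.deriv_eq, (fderiv2 hp hf hC (hx i)).deriv, hSx]

theorem stmt15 {n : ℕ} (hn : 0 < n) (p : ℝ) (hp : 0 < p) (α : Fin n → ℝ) (lam : ℝ)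
    (φ : ℝ) (hφ : 2 * φ = -p + n * (p - 1) + ∑ i, α i)
    (m : ℝ) (hm : m ≠ 0) (f : ℝ → ℝ) (hf : ContDiffOn ℝ 2 f (Ioi (0 : ℝ))) :
    (∀ x : Fin n → ℝ, (∀ i, 0 < x i) →
        Lop p α lam (fun y => f (rad p y ^ m)) x
          = m ^ 2 * (rad p x ^ m) ^ 2 * deriv (deriv f) (rad p x ^ m)
            + m * (m + 2 * φ) * (rad p x ^ m) * deriv f (rad p x ^ m)
            + lam * f (rad p x ^ m)) ∧
    ((∀ x : Fin n → ℝ, (∀ i, 0 < x i) → Lop p α lam (fun y => f (rad p y ^ m)) x = 0) ↔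
      (∀ t : ℝ, 0 < t →
        m ^ 2 * t ^ 2 * deriv (deriv f) t + m * (m + 2 * φ) * t * deriv f t
          + lam * f t = 0)) := by
  have hfd : DifferentiableOn ℝ f (Ioi 0) := hf.differentiableOn (by norm_num)
  haveI : Nonempty (Fin n) := ⟨⟨0, hn⟩⟩
  have part1 : ∀ x : Fin n → ℝ, (∀ i, 0 < x i) →
      Lop p α lam (fun y => f (rad p y ^ m)) x
        = m ^ 2 * (rad p x ^ m) ^ 2 * deriv (deriv f) (rad p x ^ m)
          + m * (m + 2 * φ) * (rad p x ^ m) * deriv f (rad p x ^ m)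
          + lam * f (rad p x ^ m) := by
    intro x hx
    have hS : 0 < ∑ j, x j ^ p :=
      Finset.sum_pos (fun j _ => Real.rpow_pos_of_pos (hx j) p) Finset.univ_nonempty
    set S := ∑ j, x j ^ p with hSdef
    set T := S ^ (m / p) with hTdef
    have hrad : rad p x ^ m = T := rad_pow p m x hS.le
    set A := deriv (deriv f) T with hA
    set B := deriv f T with hB
    rw [hrad]
    simp only [Lop]
    rw [hrad]
    have hterm : ∀ i : Fin n, (rad p x / x i) ^ p *
        ((x i) ^ 2 * pd i (fun y => pd i (fun y => f (rad p y ^ m)) y) x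
          + α i * x i * pd i (fun y => f (rad p y ^ m)) x)
        = m ^ 2 * A * (T * T / S) * x i ^ p + m * (m - p) * B * (T / S) * x i ^ p
          + (m * (p - 1) + m * α i) * B * T := by
      intro i
      rw [pd_two hp hf x hx i, pd_one hp hfd x hx i]
      have hradS : rad p x = S ^ (1/p) := rfl
      rw [hradS]
      exact alg1 A B m p (α i) (x i) S (hx i) hS hp
    rw [Finset.sum_congr rfl (fun i _ => hterm i)]
    have hsplit : ∀ i : Fin n,
        m ^ 2 * A * (T * T / S) * x i ^ p + m * (m - p) * B * (T / S) * x i ^ p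
          + (m * (p - 1) + m * α i) * B * T
        = (m ^ 2 * A * (T * T / S) + m * (m - p) * B * (T / S)) * x i ^ p
          + (m * (p - 1) * (B * T) + α i * (m * B * T)) := fun i => by ring
    rw [Finset.sum_congr rfl (fun i _ => hsplit i), Finset.sum_add_distrib,
      ← Finset.mul_sum, Finset.sum_add_distrib, Finset.sum_const, ← Finset.sum_mul,
      Finset.card_univ, Fintype.card_fin, nsmul_eq_mul, ← hSdef]
    rw [hφ]
    field_simp
    ring
  refine ⟨part1, ?_, ?_⟩
  · intro h t ht
    have hnpos : (0:ℝ) < n := Nat.cast_pos.2 hn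
    set c := t ^ (1/m) / (n:ℝ) ^ (1/p) with hc
    have hcpos : 0 < c :=
      div_pos (Real.rpow_pos_of_pos ht _) (Real.rpow_pos_of_pos hnpos _)
    have hcp : c ^ p = t ^ ((1/m) * p) / (n:ℝ) := by
      rw [hc, Real.div_rpow (Real.rpow_nonneg ht.le _) (Real.rpow_nonneg hnpos.le _),
        ← Real.rpow_mul ht.le, ← Real.rpow_mul hnpos.le,
        one_div_mul_cancel hp.ne', Real.rpow_one]
    have hSeq : ∑ _j : Fin n, c ^ p = t ^ ((1/m) * p) := by
      rw [Finset.sum_const, Finset.card_univ, Fintype.card_fin, nsmul_eq_mul, hcp]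
      field_simp
    have hradm : rad p (fun _ : Fin n => c) ^ m = t := by
      have hexp : (1/m) * p * (m / p) = 1 := by field_simp
      rw [rad_pow p m _ (by rw [hSeq]; positivity), hSeq, ← Real.rpow_mul ht.le, hexp,
        Real.rpow_one]
    have := h (fun _ => c) (fun _ => hcpos)
    rw [part1 _ (fun _ => hcpos), hradm] at this
    exact this
  · intro h x hx
    rw [part1 x hx]
    have hS : 0 < ∑ j, x j ^ p :=
      Finset.sum_pos (fun j _ => Real.rpow_pos_of_pos (hx j) p) Finset.univ_nonempty
    exact h _ (Real.rpow_pos_of_pos (Real.rpow_pos_of_pos hS _) m)
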